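/- Let G be a group and n a positive integer. The invertible elements of the monoid Matₙ(G⁰) of generalized rook matrices are exactly the matrices of the form (δ_{i,σ(j)} g_i)_{i,j} for σ ∈ Sym(Fin n) and (g₁,…,gₙ) ∈ Gⁿ, i.e., the monomial matrices with exactly one nonzero entry in each row and column. -/

import Mathlib

/-- A generalized rook matrix of order `n` over the group with zero `G⁰`:
an `n × n` matrix over `G ∪ {0}` with at most one nonzero entry in each row
and each column.  We record, for each column `j`, the (optional) pair
`(entry, row)` of its unique nonzero entry; the field `inj` states that
distinct columns use distinct rows. -/
structure Rook (n : ℕ) (G : Type*) [Group G] : Type _ where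
  col : Fin n → Option (G × Fin n)
  inj : ∀ ⦃j k : Fin n⦄ ⦃p q : G × Fin n⦄,
      col j = some p → col k = some q → p.2 = q.2 → j = k

namespace Rook

variable {n : ℕ} {G : Type*} [Group G]

theorem ext' {x y : Rook n G} (h : x.col = y.col) : x = y := by
  cases x; cases y; cases h; rfl

/-- Matrix multiplication of generalized rook matrices. -/
instance : Mul (Rook n G) where
  mul x y :=
  { col := fun j => (y.col j).bind fun p => (x.col p.2).map fun q => (q.1 * p.1, q.2)
    inj := by
      intro j k p q hp hq hpq
      simp only [Option.bind_eq_some_iff, Option.map_eq_some_iff] at hp hq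
      obtain ⟨pj, hyj, qj, hxj, rfl⟩ := hp
      obtain ⟨pk, hyk, qk, hxk, rfl⟩ := hq
      exact y.inj hyj hyk (x.inj hxj hxk hpq) }

theorem mul_col (x y : Rook n G) (j : Fin n) :
    (x * y).col j = (y.col j).bind fun p => (x.col p.2).map fun q => (q.1 * p.1, q.2) :=
  rfl

/-- The identity matrix. -/
instance : One (Rook n G) where
  one :=
  { col := fun j => some (1, j)
    inj := by
      intro j k p q hp hq hpq
      simp only [Option.some.injEq] at hp hq
      subst hp; subst hq; exact hpq }

theorem one_col (j : Fin n) : (1 : Rook n G).col j = some (1, j) := rfl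

/-- The zero matrix. -/
instance : Zero (Rook n G) where
  zero :=
  { col := fun _ => none
    inj := fun _ _ _ _ hp _ _ => by cases hp }

instance : Monoid (Rook n G) where
  mul_assoc x y z := by
    refine ext' (funext fun j => ?_)
    simp only [mul_col]
    rcases hz : z.col j with _ | p
    · simp
    rcases hy : y.col p.2 with _ | p'
    · simp [hy]
    rcases hx : x.col p'.2 with _ | p''
    · simp [hy, hx]
    simp [hy, hx, mul_assoc]
  one_mul x := by
    refine ext' (funext fun j => ?_)
    simp only [mul_col]
    rcases hx : x.col j with _ | p <;> simp [one_col]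
  mul_one x := by
    refine ext' (funext fun j => ?_)
    simp only [mul_col, one_col]
    rcases hx : x.col j with _ | p <;> simp [hx]

open scoped Classical in
/-- The inverse of a generalized rook matrix (conjugate transpose pattern). -/
noncomputable instance : Inv (Rook n G) where
  inv x :=
  { col := fun i =>
      if h : ∃ jp : Fin n × (G × Fin n), x.col jp.1 = some jp.2 ∧ jp.2.2 = i
      then some ((h.choose.2.1)⁻¹, h.choose.1)
      else none
    inj := by
      intro i i' p q hp hq hpq
      split_ifs at hp hq with h h'
      obtain ⟨hcol, hrow⟩ := h.choose_spec
      obtain ⟨hcol', hrow'⟩ := h'.choose_spec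
      injection hp with hp'
      injection hq with hq'
      subst hp'; subst hq'
      have hj : h.choose.1 = h'.choose.1 := hpq
      rw [← hj, hcol] at hcol'
      have hpq2 : h.choose.2 = h'.choose.2 := Option.some.inj hcol'
      rw [← hrow, ← hrow', hpq2] }

end Rook

/-- The invertible elements of `Matₙ(G⁰)` are exactly the monomial matrices
`(δ_{i,σ(j)} g_i)_{i,j}`: column `j` has its unique nonzero entry `g (σ j)` in
row `σ j`. -/
theorem stmt14 (n : ℕ) (hn : 0 < n) (G : Type*) [Group G] (x : Rook n G) :
    IsUnit x ↔
      ∃ (σ : Equiv.Perm (Fin n)) (g : Fin n → G),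
        ∀ j : Fin n, x.col j = some (g (σ j), σ j) := by
  constructor
  · rintro ⟨u, rfl⟩
    have hyx : (↑u⁻¹ : Rook n G) * ↑u = 1 := u.inv_mul
    have hsome : ∀ j : Fin n, ((u : Rook n G).col j).isSome := by
      intro j
      have h1 : ((↑u⁻¹ * ↑u : Rook n G)).col j = some (1, j) := by rw [hyx]; rfl
      rw [Rook.mul_col] at h1
      rcases hx : (u : Rook n G).col j with _ | p
      · rw [hx] at h1; simp at h1
      · simp [hx]
    set p : Fin n → G × Fin n := fun j => ((u : Rook n G).col j).get (hsome j) with hp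
    have hcol : ∀ j, (u : Rook n G).col j = some (p j) := fun j =>
      (Option.some_get (hsome j)).symm
    have hfinj : Function.Injective fun j => (p j).2 := by
      intro j k h
      exact (u : Rook n G).inj (hcol j) (hcol k) h
    let σ : Equiv.Perm (Fin n) :=
      Equiv.ofBijective _ (Finite.injective_iff_bijective.mp hfinj)
    refine ⟨σ, fun i => (p (σ.symm i)).1, fun j => ?_⟩
    have hσ : σ j = (p j).2 := rfl
    rw [hcol j]
    have h2 : σ.symm (σ j) = j := σ.symm_apply_apply j
    rw [hσ] at h2
    simp [hσ, h2]
  · rintro ⟨σ, g, hx⟩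
    refine ⟨⟨x, ⟨fun i => some ((g i)⁻¹, σ.symm i), ?_⟩, ?_, ?_⟩, rfl⟩
    · intro i i' q q' hq hq' hqq
      simp only [Option.some.injEq] at hq hq'
      subst hq; subst hq'
      exact σ.symm.injective hqq
    · refine Rook.ext' (funext fun i => ?_)
      have : x.col (σ.symm i) = some (g i, i) := by
        have := hx (σ.symm i); rwa [Equiv.apply_symm_apply] at this
      simp [Rook.mul_col, Rook.one_col, this]
    · refine Rook.ext' (funext fun j => ?_)
      simp [Rook.mul_col, Rook.one_col, hx j]
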